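/- Let X be a Banach space, Y a closed subspace, and suppose the Banach–Mazur distance from X/Y to some ℓ₁(Γ) space is at most C. Then there is a bounded linear projection from X onto Y of norm at most 1 + C; i.e., the relative projection constant λ(Y, X) ≤ 1 + C. -/

import Mathlib

instance : Fact ((1 : ENNReal) ≤ 1) := ⟨le_rfl⟩

set_option maxHeartbeats 1000000 in
/-- if the Banach–Mazur distance from `X/Y` to some `ℓ₁(Γ)` is at most `C`
(witnessed by an isomorphism `e` with `‖e‖·‖e⁻¹‖ ≤ C`), then for every `ε > 0` there is
a bounded linear projection from `X` onto `Y` of norm at most `1 + C + ε`; in particular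
the relative projection constant satisfies `λ(Y,X) ≤ 1 + C`. -/
theorem stmt9 {X : Type*} [NormedAddCommGroup X] [NormedSpace ℝ X] [CompleteSpace X]
    (Y : Submodule ℝ X) (hY : IsClosed (Y : Set X)) (Γ : Type*) (C : ℝ)
    (e : (X ⧸ Y) ≃L[ℝ] lp (fun _ : Γ => ℝ) 1)
    (he : ‖(e : (X ⧸ Y) →L[ℝ] lp (fun _ : Γ => ℝ) 1)‖ *
      ‖(e.symm : lp (fun _ : Γ => ℝ) 1 →L[ℝ] (X ⧸ Y))‖ ≤ C) :
    ∀ ε > 0, ∃ P : X →L[ℝ] X,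
      (∀ x, P x ∈ Y) ∧ (∀ y ∈ Y, P y = y) ∧ ‖P‖ ≤ 1 + C + ε := by
  classical
  intro ε hε
  set Ec : (X ⧸ Y) →L[ℝ] lp (fun _ : Γ => ℝ) 1 := (e : (X ⧸ Y) →L[ℝ] lp (fun _ : Γ => ℝ) 1)
  set S : lp (fun _ : Γ => ℝ) 1 →L[ℝ] (X ⧸ Y) :=
    (e.symm : lp (fun _ : Γ => ℝ) 1 →L[ℝ] (X ⧸ Y))
  -- the quotient map as a continuous linear map
  let Q : X →L[ℝ] X ⧸ Y :=
    LinearMap.mkContinuous Y.mkQ 1 (fun x => by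
      simpa using Submodule.Quotient.norm_mk_le Y x)
  have hQx : ∀ x : X, Q x = Submodule.Quotient.mk x := fun x => rfl
  have hQnorm : ‖Q‖ ≤ 1 := LinearMap.mkContinuous_norm_le _ zero_le_one _
  -- choose ε'
  set ε' : ℝ := ε / (‖Ec‖ + 1) with hε'def
  have hEpos : (0:ℝ) < ‖Ec‖ + 1 := by positivity
  have hε' : 0 < ε' := div_pos hε hEpos
  -- the norm of a single
  have hnorm_single : ∀ γ : Γ, ‖lp.single (E := fun _ : Γ => ℝ) 1 γ (1:ℝ)‖ = 1 := fun γ => by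
    have := lp.norm_single (p := 1) (E := fun _ : Γ => ℝ)
      (by norm_num : (0:ENNReal) < 1) γ (1:ℝ)
    simpa using this
  -- choose lifts of e.symm on singles
  have hu : ∀ γ : Γ, ∃ x : X, (Submodule.Quotient.mk x : X ⧸ Y) = e.symm (lp.single 1 γ 1) ∧
      ‖x‖ < ‖S‖ + ε' := by
    intro γ
    obtain ⟨x, hx1, hx2⟩ := Submodule.Quotient.norm_mk_lt
      (e.symm (lp.single 1 γ (1:ℝ))) hε'
    refine ⟨x, hx1, hx2.trans_le ?_⟩
    have h0 : ‖S (lp.single 1 γ (1:ℝ))‖ ≤ ‖S‖ :=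
      S.unit_le_opNorm _ (hnorm_single γ).le
    have hSe : S (lp.single 1 γ (1:ℝ)) = e.symm (lp.single 1 γ (1:ℝ)) := rfl
    rw [hSe] at h0
    linarith
  choose u hu1 hu2 using hu
  set M : ℝ := ‖S‖ + ε' with hMdef
  have hM0 : 0 ≤ M := by positivity
  -- summability facts
  have hsumf : ∀ f : lp (fun _ : Γ => ℝ) 1, Summable fun γ => ‖f γ‖ := by
    intro f
    have := (lp.memℓp f).summable (by norm_num : 0 < (1:ENNReal).toReal)
    simpa using this
  have hsum : ∀ f : lp (fun _ : Γ => ℝ) 1, Summable fun γ => f γ • u γ := by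
    intro f
    refine Summable.of_norm_bounded ((hsumf f).mul_right M) ?_
    intro γ
    rw [norm_smul]
    exact mul_le_mul_of_nonneg_left (hu2 γ).le (norm_nonneg _)
  -- the norm of f is the tsum of the norms
  have hnormf : ∀ f : lp (fun _ : Γ => ℝ) 1, ‖f‖ = ∑' γ, ‖f γ‖ := by
    intro f
    have := lp.norm_eq_tsum_rpow (p := 1) (by norm_num : 0 < (1:ENNReal).toReal) f
    simpa using this
  -- the lifted operator
  let Tlin : lp (fun _ : Γ => ℝ) 1 →ₗ[ℝ] X :=
    { toFun := fun f => ∑' γ, f γ • u γ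
      map_add' := by
        intro f g
        have : ∀ γ : Γ, (↑(f + g) : ∀ _ : Γ, ℝ) γ • u γ = f γ • u γ + g γ • u γ := by
          intro γ
          rw [lp.coeFn_add]
          simp [add_smul]
        simp only [this]
        exact Summable.tsum_add (hsum f) (hsum g)
      map_smul' := by
        intro c f
        have : ∀ γ : Γ, (↑(c • f) : ∀ _ : Γ, ℝ) γ • u γ = c • (f γ • u γ) := by
          intro γ
          rw [lp.coeFn_smul]
          simp [smul_smul]
        simp only [this, RingHom.id_apply]
        exact Summable.tsum_const_smul c (hsum f) }
  have hTbound : ∀ f : lp (fun _ : Γ => ℝ) 1, ‖Tlin f‖ ≤ M * ‖f‖ := by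
    intro f
    have h1 : ‖Tlin f‖ ≤ ∑' γ, ‖f γ • u γ‖ := by
      refine norm_tsum_le_tsum_norm ?_
      refine Summable.of_nonneg_of_le (fun γ => norm_nonneg _) (fun γ => ?_)
        ((hsumf f).mul_right M)
      rw [norm_smul]
      exact mul_le_mul_of_nonneg_left (hu2 γ).le (norm_nonneg _)
    have h2 : (∑' γ, ‖f γ • u γ‖) ≤ ∑' γ, ‖f γ‖ * M := by
      refine Summable.tsum_le_tsum (fun γ => ?_) ?_ ((hsumf f).mul_right M)
      · rw [norm_smul]
        exact mul_le_mul_of_nonneg_left (hu2 γ).le (norm_nonneg _)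
      · refine Summable.of_nonneg_of_le (fun γ => norm_nonneg _) (fun γ => ?_)
          ((hsumf f).mul_right M)
        rw [norm_smul]
        exact mul_le_mul_of_nonneg_left (hu2 γ).le (norm_nonneg _)
    have h3 : (∑' γ, ‖f γ‖ * M) = M * ‖f‖ := by
      rw [tsum_mul_right, ← hnormf f, mul_comm]
    linarith
  let T : lp (fun _ : Γ => ℝ) 1 →L[ℝ] X := LinearMap.mkContinuous Tlin M hTbound
  have hTnorm : ‖T‖ ≤ M := LinearMap.mkContinuous_norm_le _ hM0 _
  -- key lifting property : Q ∘ T = S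
  have hQT : ∀ f : lp (fun _ : Γ => ℝ) 1, Q (T f) = e.symm f := by
    intro f
    have h1 : HasSum (fun γ : Γ => lp.single 1 γ (f γ)) f :=
      lp.hasSum_single (by norm_num) f
    have h2 : HasSum (fun γ : Γ => S (lp.single 1 γ (f γ))) (S f) := h1.mapL S
    have h3 : HasSum (fun γ : Γ => Q (f γ • u γ)) (Q (T f)) := by
      have : HasSum (fun γ : Γ => f γ • u γ) (T f) := (hsum f).hasSum
      exact this.mapL Q
    have h4 : ∀ γ : Γ, S (lp.single 1 γ (f γ)) = Q (f γ • u γ) := by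
      intro γ
      have hs : lp.single 1 γ (f γ) = f γ • lp.single (E := fun _ : Γ => ℝ) 1 γ (1:ℝ) := by
        rw [← lp.single_smul]
        norm_num
      rw [hs, map_smul, map_smul, hQx]
      have : (Submodule.Quotient.mk (u γ) : X ⧸ Y) = e.symm (lp.single 1 γ 1) := hu1 γ
      rw [this]
      rfl
    rw [show (fun γ : Γ => S (lp.single 1 γ (f γ))) = fun γ : Γ => Q (f γ • u γ) from
      funext h4] at h2
    exact (h3.unique h2).symm ▸ (h3.unique h2).symm
  -- the projection
  refine ⟨ContinuousLinearMap.id ℝ X - T.comp (Ec.comp Q), ?_, ?_, ?_⟩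
  · intro x
    have : Q (x - T (Ec (Q x))) = 0 := by
      rw [map_sub, hQT]
      show Q x - e.symm (e (Q x)) = 0
      rw [e.symm_apply_apply, sub_self]
    rw [hQx] at this
    have hmem : x - T (Ec (Q x)) ∈ Y := (Submodule.Quotient.mk_eq_zero Y).1 this
    simpa using hmem
  · intro y hy
    have hQy : Q y = 0 := by
      rw [hQx]
      exact (Submodule.Quotient.mk_eq_zero Y).2 hy
    simp [hQy]
  · have h1 : ‖ContinuousLinearMap.id ℝ X - T.comp (Ec.comp Q)‖ ≤
        ‖ContinuousLinearMap.id ℝ X‖ + ‖T.comp (Ec.comp Q)‖ := norm_sub_le _ _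
    have h2 : ‖T.comp (Ec.comp Q)‖ ≤ M * (‖Ec‖ * ‖Q‖) := by
      calc ‖T.comp (Ec.comp Q)‖ ≤ ‖T‖ * ‖Ec.comp Q‖ := ContinuousLinearMap.opNorm_comp_le _ _
        _ ≤ M * (‖Ec‖ * ‖Q‖) :=
          mul_le_mul hTnorm (ContinuousLinearMap.opNorm_comp_le _ _) (norm_nonneg _) hM0
    have hId : ‖ContinuousLinearMap.id ℝ X‖ ≤ 1 := ContinuousLinearMap.norm_id_le
    have hEQ : ‖Ec‖ * ‖Q‖ ≤ ‖Ec‖ := by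
      calc ‖Ec‖ * ‖Q‖ ≤ ‖Ec‖ * 1 := mul_le_mul_of_nonneg_left hQnorm (norm_nonneg Ec)
        _ = ‖Ec‖ := mul_one _
    have hM : M * (‖Ec‖ * ‖Q‖) ≤ M * ‖Ec‖ := mul_le_mul_of_nonneg_left hEQ hM0
    have hME : M * ‖Ec‖ ≤ C + ε := by
      have hfin : ε' * ‖Ec‖ ≤ ε := by
        have h5 : ε' * (‖Ec‖ + 1) = ε := by
          rw [hε'def, div_mul_cancel₀ _ hEpos.ne']
        nlinarith [hε'.le]
      have : M * ‖Ec‖ = ‖Ec‖ * ‖S‖ + ε' * ‖Ec‖ := by rw [hMdef]; ring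
      linarith
    linarith
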